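/- For every Euclidean-spacelike unit vector ξ ∈ ℝ^d (i.e. |ξ₀| < ‖ξ_r‖, ‖ξ‖ = 1 for the Euclidean norm), there exists a Minkowski-spacelike vector y_ξ ∈ ℝ^d with ⟨y_ξ, ξ⟩ = 1 (Euclidean inner product) such that for all v ⊥ ξ (Euclidean orthogonality) and all λ ∈ ℝ: γ(λ y_ξ + v) = γ(λ y_ξ - v), where γ(x) = x₀² - Σ_{i≥1} xᵢ². -/

import Mathlib

/-- The Minkowski quadratic form `γ(x) = x₀² - Σ_{i≠0} xᵢ²` on `ℝ^d`. -/
def minkGamma {d : ℕ} [NeZero d] (x : Fin d → ℝ) : ℝ :=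
  (x 0) ^ 2 - ∑ i ∈ Finset.univ.filter (fun i : Fin d => i ≠ 0), (x i) ^ 2

/-- The Euclidean inner product on `ℝ^d`. -/
def eucInner {d : ℕ} (x y : Fin d → ℝ) : ℝ := ∑ i, x i * y i

lemma split_sum {d : ℕ} [NeZero d] (f : Fin d → ℝ) :
    ∑ i, f i = f 0 + ∑ i ∈ Finset.univ.filter (fun i : Fin d => i ≠ 0), f i := by
  rw [Finset.filter_ne', ← Finset.add_sum_erase Finset.univ f (Finset.mem_univ 0)]

/-- For every Euclidean-spacelike unit vector `ξ` (i.e. `ξ₀² < ‖ξ_r‖²`, `‖ξ‖ = 1`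
for the Euclidean norm), there is a Minkowski-spacelike vector `y_ξ` with
`⟨y_ξ, ξ⟩ = 1` such that `γ(λ y_ξ + v) = γ(λ y_ξ - v)` for all `v ⊥ ξ` and `λ ∈ ℝ`. -/
theorem exists_reflection_vector {d : ℕ} [NeZero d] (ξ : Fin d → ℝ)
    (hunit : ∑ i, (ξ i) ^ 2 = 1)
    (hsp : (ξ 0) ^ 2 < ∑ i ∈ Finset.univ.filter (fun i : Fin d => i ≠ 0), (ξ i) ^ 2) :
    ∃ y : Fin d → ℝ, minkGamma y < 0 ∧ eucInner y ξ = 1 ∧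
      ∀ v : Fin d → ℝ, eucInner v ξ = 0 →
        ∀ l : ℝ, minkGamma (l • y + v) = minkGamma (l • y - v) := by
  classical
  set S : ℝ := ∑ i ∈ Finset.univ.filter (fun i : Fin d => i ≠ 0), (ξ i) ^ 2 with hS
  set g : ℝ := (ξ 0) ^ 2 - S with hgdef
  have hg : g < 0 := sub_neg.mpr hsp
  have hg0 : g ≠ 0 := ne_of_lt hg
  refine ⟨fun i => g⁻¹ * (if i = 0 then ξ 0 else -ξ i), ?_, ?_, ?_⟩
  · -- minkGamma y = g⁻¹ < 0
    have : minkGamma (fun i => g⁻¹ * (if i = 0 then ξ 0 else -ξ i)) = g⁻¹ := by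
      unfold minkGamma
      have h1 : ∑ i ∈ Finset.univ.filter (fun i : Fin d => i ≠ 0),
          (g⁻¹ * (if i = 0 then ξ 0 else -ξ i)) ^ 2
          = g⁻¹ ^ 2 * S := by
        rw [hS, Finset.mul_sum]
        refine Finset.sum_congr rfl fun i hi => ?_
        rw [if_neg (Finset.mem_filter.mp hi).2]
        ring
      simp only [if_pos rfl, h1]
      field_simp
      simp [hgdef]
    rw [this]
    exact inv_lt_zero.mpr hg
  · -- eucInner y ξ = 1
    unfold eucInner
    rw [split_sum]
    have h1 : ∑ i ∈ Finset.univ.filter (fun i : Fin d => i ≠ 0),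
        (g⁻¹ * (if i = 0 then ξ 0 else -ξ i)) * ξ i
        = ∑ i ∈ Finset.univ.filter (fun i : Fin d => i ≠ 0), -(g⁻¹ * (ξ i) ^ 2) := by
      refine Finset.sum_congr rfl fun i hi => ?_
      rw [if_neg (Finset.mem_filter.mp hi).2]
      ring
    have h0 : (fun i : Fin d => g⁻¹ * (if i = 0 then ξ 0 else -ξ i)) 0 * ξ 0
        = g⁻¹ * ξ 0 * ξ 0 := by simp
    rw [h1, h0, Finset.sum_neg_distrib, ← Finset.mul_sum, ← hS]
    field_simp
    ring
  · intro v hv l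
    have hv' : v 0 * ξ 0 + ∑ i ∈ Finset.univ.filter (fun i : Fin d => i ≠ 0),
        v i * ξ i = 0 := by
      have h := split_sum (fun i => v i * ξ i)
      unfold eucInner at hv
      linarith
    unfold minkGamma
    simp only [Pi.add_apply, Pi.sub_apply, Pi.smul_apply, smul_eq_mul]
    have hsum : ∑ i ∈ Finset.univ.filter (fun i : Fin d => i ≠ 0),
          (l * (g⁻¹ * (if i = 0 then ξ 0 else -ξ i)) + v i) ^ 2
        - ∑ i ∈ Finset.univ.filter (fun i : Fin d => i ≠ 0),
          (l * (g⁻¹ * (if i = 0 then ξ 0 else -ξ i)) - v i) ^ 2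
        = -(4 * l * g⁻¹) * ∑ i ∈ Finset.univ.filter (fun i : Fin d => i ≠ 0),
            v i * ξ i := by
      rw [← Finset.sum_sub_distrib, Finset.mul_sum]
      refine Finset.sum_congr rfl fun i hi => ?_
      rw [if_neg (Finset.mem_filter.mp hi).2]
      ring
    have hrest : ∑ i ∈ Finset.univ.filter (fun i : Fin d => i ≠ 0), v i * ξ i
        = -(v 0 * ξ 0) := by linarith
    simp only [if_true, eq_self_iff_true]
    rw [hrest] at hsum
    linear_combination -hsum
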